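/- Let d ≥ 1, let A ∈ ℝ^{d×d} be symmetric and invertible, let q ∈ ℝ^{d×d} be symmetric positive semidefinite with positive semidefinite square root q^{1/2}, let B, m₀ ∈ ℝ^d and C ∈ ℝ, and assume that I_d − 2 q^{1/2} A q^{1/2} is positive definite. Set K := I_d − 2Aq and a := 2Am₀ + B. Then K is invertible with det K > 0, and ∫_{ℝ^d} exp( (m₀ + q^{1/2}x)ᵀ A (m₀ + q^{1/2}x) + Bᵀ(m₀ + q^{1/2}x) + C ) · (2π)^{−d/2} exp(−‖x‖²/2) dx = exp( m₀ᵀAm₀ + Bᵀm₀ + C ) · (det K)^{−1/2} · exp( (1/2) aᵀ q K⁻¹ a ). -/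

import Mathlib

open MeasureTheory Matrix

private lemma dot_symm_aux {d : ℕ} (N : Matrix (Fin d) (Fin d) ℝ) (hN : Nᵀ = N)
    (u v : Fin d → ℝ) : u ⬝ᵥ (N *ᵥ v) = (N *ᵥ u) ⬝ᵥ v := by
  rw [Matrix.dotProduct_mulVec, ← Matrix.mulVec_transpose, hN]

private lemma gauss_pi (d : ℕ) :
    ∫ x : Fin d → ℝ, Real.exp (-(x ⬝ᵥ x)/2) = (2*Real.pi) ^ ((d:ℝ)/2) := by
  have h1 : ∀ x : Fin d → ℝ, Real.exp (-(x ⬝ᵥ x)/2) = ∏ i, Real.exp (-(x i * x i)/2) := by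
    intro x
    rw [← Real.exp_sum]
    congr 1
    simp [dotProduct, neg_div, Finset.sum_div]
  simp_rw [h1]
  rw [MeasureTheory.volume_pi, MeasureTheory.integral_fintype_prod_eq_pow (ι := Fin d) (fun t : ℝ => Real.exp (-(t*t)/2))]
  have h2 : ∫ t : ℝ, Real.exp (-(t*t)/2) = Real.sqrt (2*Real.pi) := by
    have h : (fun t : ℝ => Real.exp (-(t*t)/2)) = fun t : ℝ => Real.exp (-(1/2) * t^2) := by
      funext t; congr 1; ring
    rw [h, integral_gaussian]
    congr 1
    rw [div_div_eq_mul_div, div_one, mul_comm]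
  rw [h2, Fintype.card_fin, Real.sqrt_eq_rpow,
    ← Real.rpow_natCast ((2*Real.pi) ^ ((1:ℝ)/2)) d, ← Real.rpow_mul (by positivity)]
  ring_nf

private lemma linear_change {d : ℕ} (S : Matrix (Fin d) (Fin d) ℝ) (hS : S.det ≠ 0)
    (g : (Fin d → ℝ) → ℝ) (hg : Continuous g) :
    ∫ x : Fin d → ℝ, g (S *ᵥ x) = |S.det⁻¹| * ∫ y, g y := by
  have h1 : Measure.map (Matrix.toLin' S) volume
      = ENNReal.ofReal |(S.det)⁻¹| • volume := by
    rw [← LinearMap.det_toLin' S] at hS ⊢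
    exact Real.map_linearMap_volume_pi_eq_smul_volume_pi hS
  have h2 : ∫ x : Fin d → ℝ, g (S *ᵥ x) = ∫ y, g y ∂(Measure.map (Matrix.toLin' S) volume) := by
    rw [integral_map ((Matrix.toLin' S).continuous_of_finiteDimensional).aemeasurable
      hg.aestronglyMeasurable]
    simp [Matrix.toLin'_apply]
  rw [h2, h1, integral_smul_measure, smul_eq_mul, ENNReal.toReal_ofReal (abs_nonneg _)]

theorem stmt_7 (d : ℕ) (hd : 1 ≤ d)
    (A q R : Matrix (Fin d) (Fin d) ℝ)
    (hA : A.IsSymm) (hAunit : IsUnit A)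
    (hq : q.PosSemidef) (hR : R.PosSemidef) (hRq : R * R = q)
    (B m₀ : Fin d → ℝ) (C : ℝ)
    (hpd : (1 - (2 : ℝ) • (R * A * R)).PosDef)
    (K : Matrix (Fin d) (Fin d) ℝ) (hK : K = 1 - (2 : ℝ) • (A * q))
    (a : Fin d → ℝ) (ha : a = (2 : ℝ) • (A *ᵥ m₀) + B) :
    IsUnit K ∧ 0 < K.det ∧
      ∫ x : Fin d → ℝ,
          Real.exp ((m₀ + R *ᵥ x) ⬝ᵥ (A *ᵥ (m₀ + R *ᵥ x)) + B ⬝ᵥ (m₀ + R *ᵥ x) + C) *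
            ((2 * Real.pi) ^ (-(d : ℝ) / 2) * Real.exp (-(x ⬝ᵥ x) / 2))
        = Real.exp (m₀ ⬝ᵥ (A *ᵥ m₀) + B ⬝ᵥ m₀ + C) * K.det ^ (-(1 : ℝ) / 2) *
            Real.exp ((1 / 2) * (a ⬝ᵥ ((q * K⁻¹) *ᵥ a))) := by
  classical
  set M : Matrix (Fin d) (Fin d) ℝ := 1 - (2:ℝ) • (R * A * R) with hMdef
  have hAsymm : Aᵀ = A := hA
  have hRsymm : Rᵀ = R := by
    have := hR.1; rw [Matrix.IsHermitian] at this; simpa using this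
  have hMsymm : Mᵀ = M := by
    rw [hMdef]
    simp [transpose_sub, transpose_smul, transpose_mul, hRsymm, hAsymm, Matrix.mul_assoc]
  -- determinant
  have detM_pos : 0 < M.det := hpd.det_pos
  have detMK : M.det = K.det := by
    have h1 : M = 1 - R * ((2:ℝ) • (A * R)) := by
      rw [hMdef]; rw [mul_smul_comm, Matrix.mul_assoc]
    have h2 : K = 1 - ((2:ℝ) • (A * R)) * R := by
      rw [hK, ← hRq, smul_mul_assoc, Matrix.mul_assoc]
    rw [h1, h2, Matrix.det_one_sub_mul_comm]
  have detK_pos : 0 < K.det := detMK ▸ detM_pos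
  have hKunit : IsUnit K := (Matrix.isUnit_iff_isUnit_det K).2 detK_pos.ne'.isUnit
  have hMunit : IsUnit M.det := detM_pos.ne'.isUnit
  refine ⟨hKunit, detK_pos, ?_⟩
  -- matrix identity q * K⁻¹ = R * M⁻¹ * R
  have hRK : R * K = M * R := by
    rw [hK, hMdef, ← hRq]
    simp only [Matrix.mul_sub, Matrix.sub_mul, Matrix.mul_one, Matrix.one_mul,
      Matrix.mul_smul, Matrix.smul_mul, Matrix.mul_assoc]
  have hMinvR : M⁻¹ * R = R * K⁻¹ := by
    have h1 : M⁻¹ * (M * R) * K⁻¹ = R * K⁻¹ := by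
      rw [← Matrix.mul_assoc, Matrix.nonsing_inv_mul M hMunit, Matrix.one_mul]
    rw [← hRK] at h1
    rw [← h1, Matrix.mul_assoc, Matrix.mul_assoc, Matrix.mul_nonsing_inv K
      ((Matrix.isUnit_iff_isUnit_det K).1 hKunit), Matrix.mul_one]
  have hqKinv : q * K⁻¹ = R * M⁻¹ * R := by
    rw [← hRq, Matrix.mul_assoc, ← hMinvR, Matrix.mul_assoc]
  have hMinvsymm : (M⁻¹)ᵀ = M⁻¹ := by
    rw [Matrix.transpose_nonsing_inv, hMsymm]
  -- square root of M
  have hMps : M.PosSemidef := hpd.posSemidef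
  set S : Matrix (Fin d) (Fin d) ℝ := (open MatrixOrder in CFC.sqrt M) with hSdef
  have hS2 : S * S = M := by open MatrixOrder in exact CFC.sqrt_mul_sqrt_self M hMps.nonneg
  have hSps : S.PosSemidef := by open MatrixOrder in exact Matrix.nonneg_iff_posSemidef.mp (CFC.sqrt_nonneg M)
  have hSsymm : Sᵀ = S := by
    have := hSps.1; rw [Matrix.IsHermitian] at this; simpa using this
  have detS_nonneg : 0 ≤ S.det := by
    rw [hSps.1.det_eq_prod_eigenvalues]
    exact Finset.prod_nonneg fun i _ => by exact_mod_cast hSps.eigenvalues_nonneg i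
  have detS_sq : S.det * S.det = M.det := by rw [← Matrix.det_mul, hS2]
  have detS_pos : 0 < S.det := by
    rcases detS_nonneg.lt_or_eq with h | h
    · exact h
    · exfalso; rw [← h] at detS_sq; simp at detS_sq; rw [← detS_sq] at detM_pos; simp at detM_pos
  have detS_eq : S.det = Real.sqrt K.det := by
    rw [← detMK, ← detS_sq, Real.sqrt_mul_self detS_nonneg]
  -- vectors
  set b : Fin d → ℝ := R *ᵥ a with hbdef
  set c : Fin d → ℝ := M⁻¹ *ᵥ b with hcdef
  have hMc : M *ᵥ c = b := by
    rw [hcdef, Matrix.mulVec_mulVec, Matrix.mul_nonsing_inv M hMunit, Matrix.one_mulVec]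
  have hbc : b ⬝ᵥ c = a ⬝ᵥ ((q * K⁻¹) *ᵥ a) := by
    rw [hqKinv, hbdef, hcdef, hbdef]
    rw [← dot_symm_aux R hRsymm a (M⁻¹ *ᵥ (R *ᵥ a))]
    rw [Matrix.mulVec_mulVec, Matrix.mulVec_mulVec, Matrix.mul_assoc]
  set cst : ℝ := m₀ ⬝ᵥ (A *ᵥ m₀) + B ⬝ᵥ m₀ + C with hcst
  set c2 : ℝ := (2 * Real.pi) ^ (-(d : ℝ) / 2) with hc2
  -- exponent identity
  have key : ∀ x : Fin d → ℝ,
      (m₀ + R *ᵥ x) ⬝ᵥ (A *ᵥ (m₀ + R *ᵥ x)) + B ⬝ᵥ (m₀ + R *ᵥ x) + C + (-(x ⬝ᵥ x) / 2)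
        = cst + (b ⬝ᵥ x - (1/2) * (x ⬝ᵥ (M *ᵥ x))) := by
    intro x
    have e1 : (R *ᵥ x) ⬝ᵥ (A *ᵥ m₀) = m₀ ⬝ᵥ (A *ᵥ (R *ᵥ x)) := by
      rw [dot_symm_aux A hAsymm (R *ᵥ x) m₀, dotProduct_comm]
    have e2 : b ⬝ᵥ x = 2 * (m₀ ⬝ᵥ (A *ᵥ (R *ᵥ x))) + B ⬝ᵥ (R *ᵥ x) := by
      rw [hbdef, ← dot_symm_aux R hRsymm a x, ha]
      rw [add_dotProduct, smul_dotProduct, dot_symm_aux A hAsymm m₀ (R *ᵥ x)]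
      simp [smul_eq_mul]
    have e3 : x ⬝ᵥ (M *ᵥ x) = x ⬝ᵥ x - 2 * ((R *ᵥ x) ⬝ᵥ (A *ᵥ (R *ᵥ x))) := by
      rw [hMdef, Matrix.sub_mulVec, Matrix.one_mulVec, dotProduct_sub, smul_mulVec,
        dotProduct_smul]
      congr 1
      rw [smul_eq_mul]
      congr 1
      rw [← Matrix.mulVec_mulVec, ← Matrix.mulVec_mulVec,
        dot_symm_aux R hRsymm x (A *ᵥ (R *ᵥ x))]
    rw [Matrix.mulVec_add, dotProduct_add, add_dotProduct, add_dotProduct, dotProduct_add,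
      e1, e2, e3, hcst]
    ring
  -- first integrand rewrite
  have hInt1 : (fun x : Fin d → ℝ =>
      Real.exp ((m₀ + R *ᵥ x) ⬝ᵥ (A *ᵥ (m₀ + R *ᵥ x)) + B ⬝ᵥ (m₀ + R *ᵥ x) + C) *
        (c2 * Real.exp (-(x ⬝ᵥ x) / 2)))
      = fun x => (c2 * Real.exp cst) * Real.exp (b ⬝ᵥ x - (1/2) * (x ⬝ᵥ (M *ᵥ x))) := by
    funext x
    calc Real.exp ((m₀ + R *ᵥ x) ⬝ᵥ (A *ᵥ (m₀ + R *ᵥ x)) + B ⬝ᵥ (m₀ + R *ᵥ x) + C) *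
        (c2 * Real.exp (-(x ⬝ᵥ x) / 2))
        = c2 * (Real.exp ((m₀ + R *ᵥ x) ⬝ᵥ (A *ᵥ (m₀ + R *ᵥ x)) + B ⬝ᵥ (m₀ + R *ᵥ x) + C) *
          Real.exp (-(x ⬝ᵥ x) / 2)) := by ring
      _ = c2 * Real.exp ((m₀ + R *ᵥ x) ⬝ᵥ (A *ᵥ (m₀ + R *ᵥ x)) + B ⬝ᵥ (m₀ + R *ᵥ x) + C
          + (-(x ⬝ᵥ x) / 2)) := by rw [← Real.exp_add]
      _ = c2 * Real.exp (cst + (b ⬝ᵥ x - (1/2) * (x ⬝ᵥ (M *ᵥ x)))) := by rw [key x]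
      _ = (c2 * Real.exp cst) * Real.exp (b ⬝ᵥ x - (1/2) * (x ⬝ᵥ (M *ᵥ x))) := by
          rw [Real.exp_add, ← mul_assoc]
  -- translation step
  have ptw : (fun x : Fin d → ℝ =>
      Real.exp (b ⬝ᵥ (x + c) - (1/2) * ((x + c) ⬝ᵥ (M *ᵥ (x + c)))))
      = fun x => Real.exp ((1/2) * (b ⬝ᵥ c)) * Real.exp (-(1/2) * (x ⬝ᵥ (M *ᵥ x))) := by
    funext x
    have q1 : b ⬝ᵥ (x + c) = b ⬝ᵥ x + b ⬝ᵥ c := dotProduct_add _ _ _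
    have q2 : (x + c) ⬝ᵥ (M *ᵥ (x + c)) = x ⬝ᵥ (M *ᵥ x) + 2 * (b ⬝ᵥ x) + b ⬝ᵥ c := by
      rw [Matrix.mulVec_add, dotProduct_add, add_dotProduct, add_dotProduct,
        dot_symm_aux M hMsymm c x, hMc, dotProduct_comm x b, dotProduct_comm c b]
      ring
    rw [q1, q2, ← Real.exp_add]
    congr 1; ring
  have hJ : (∫ x : Fin d → ℝ, Real.exp (b ⬝ᵥ x - (1/2) * (x ⬝ᵥ (M *ᵥ x))))
      = Real.exp ((1/2) * (b ⬝ᵥ c)) *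
        ∫ x : Fin d → ℝ, Real.exp (-(1/2) * (x ⬝ᵥ (M *ᵥ x))) := by
    have htr := MeasureTheory.integral_add_right_eq_self (μ := volume)
      (fun x : Fin d → ℝ => Real.exp (b ⬝ᵥ x - (1/2) * (x ⬝ᵥ (M *ᵥ x)))) c
    calc (∫ x : Fin d → ℝ, Real.exp (b ⬝ᵥ x - (1/2) * (x ⬝ᵥ (M *ᵥ x))))
        = ∫ x : Fin d → ℝ, Real.exp (b ⬝ᵥ (x + c) - (1/2) * ((x + c) ⬝ᵥ (M *ᵥ (x + c)))) :=
          htr.symm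
      _ = ∫ x : Fin d → ℝ, Real.exp ((1/2) * (b ⬝ᵥ c)) * Real.exp (-(1/2) * (x ⬝ᵥ (M *ᵥ x))) := by
          rw [ptw]
      _ = Real.exp ((1/2) * (b ⬝ᵥ c)) *
          ∫ x : Fin d → ℝ, Real.exp (-(1/2) * (x ⬝ᵥ (M *ᵥ x))) := integral_const_mul _ _
  -- Gaussian integral with quadratic form M
  have hJ0 : (∫ x : Fin d → ℝ, Real.exp (-(1/2) * (x ⬝ᵥ (M *ᵥ x))))
      = (S.det)⁻¹ * (2 * Real.pi) ^ ((d:ℝ)/2) := by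
    have hq2 : (fun x : Fin d → ℝ => Real.exp (-(1/2) * (x ⬝ᵥ (M *ᵥ x))))
        = fun x => Real.exp (-((S *ᵥ x) ⬝ᵥ (S *ᵥ x))/2) := by
      funext x
      have hx : x ⬝ᵥ (M *ᵥ x) = (S *ᵥ x) ⬝ᵥ (S *ᵥ x) := by
        rw [← hS2, ← Matrix.mulVec_mulVec, dot_symm_aux S hSsymm x (S *ᵥ x)]
      rw [hx]; congr 1; ring
    have hcont : Continuous fun y : Fin d → ℝ => Real.exp (-(y ⬝ᵥ y)/2) := by
      apply Real.continuous_exp.comp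
      apply Continuous.div_const
      apply Continuous.neg
      exact continuous_finset_sum _ fun i _ => (continuous_apply i).mul (continuous_apply i)
    rw [hq2, linear_change S detS_pos.ne' (fun y => Real.exp (-(y ⬝ᵥ y)/2)) hcont,
      gauss_pi, abs_of_pos (inv_pos.2 detS_pos)]
  -- assemble
  have h1 : c2 * (2 * Real.pi) ^ ((d:ℝ)/2) = 1 := by
    rw [hc2, ← Real.rpow_add (by positivity)]
    rw [show -(d:ℝ) / 2 + (d:ℝ) / 2 = 0 by ring, Real.rpow_zero]
  have h2 : (S.det)⁻¹ = K.det ^ (-(1:ℝ)/2) := by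
    rw [detS_eq, Real.sqrt_eq_rpow, ← Real.rpow_neg detK_pos.le]
    norm_num
  rw [hInt1, integral_const_mul, hJ, hJ0, hbc]
  rw [← h2]
  calc (c2 * Real.exp cst) * (Real.exp ((1/2) * (a ⬝ᵥ ((q * K⁻¹) *ᵥ a))) *
        ((S.det)⁻¹ * (2 * Real.pi) ^ ((d:ℝ)/2)))
      = (c2 * (2 * Real.pi) ^ ((d:ℝ)/2)) *
        (Real.exp cst * (S.det)⁻¹ * Real.exp ((1/2) * (a ⬝ᵥ ((q * K⁻¹) *ᵥ a)))) := by ring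
    _ = Real.exp cst * (S.det)⁻¹ * Real.exp ((1/2) * (a ⬝ᵥ ((q * K⁻¹) *ᵥ a))) := by
        rw [h1, one_mul]
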